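/- Let k be a field and N ≥ 1. Every persistence module M of length N with all M_i finite-dimensional is isomorphic (as a functor to k-vector spaces) to a finite direct sum of interval modules: there exist m ≥ 0 and pairs (b_1, d_1), …, (b_m, d_m) with 0 ≤ b_l ≤ d_l ≤ N−1 such that M ≅ ⊕_{l=1}^m I[b_l, d_l]. -/

import Mathlib

/-- A persistence module of length `N` over a field `k`: a functor from the linear order
`{0, 1, …, N-1}` to the category of `k`-vector spaces. -/
structure PersistenceModule (k : Type) [Field k] (N : ℕ) where
  V : Fin N → Type
  [acg : ∀ i, AddCommGroup (V i)]
  [mod : ∀ i, Module k (V i)]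
  map : ∀ i j : Fin N, i ≤ j → (V i →ₗ[k] V j)
  map_id : ∀ i : Fin N, map i i le_rfl = LinearMap.id
  map_comp : ∀ (i j l : Fin N) (hij : i ≤ j) (hjl : j ≤ l),
    map j l hjl ∘ₗ map i j hij = map i l (hij.trans hjl)

attribute [instance] PersistenceModule.acg PersistenceModule.mod

/-- The dimension (1 or 0) of the interval module `I[b,d]` at index `i`. -/
def intervalDim {N : ℕ} (b d i : Fin N) : ℕ := if b ≤ i ∧ i ≤ d then 1 else 0

/-- The interval module `I[b,d]`: one-dimensional (a copy of `k`) at indices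
`b ≤ i ≤ d` and zero elsewhere, with identity structure maps on the interval and zero
structure maps elsewhere. -/
noncomputable def intervalModule (k : Type) [Field k] (N : ℕ) (b d : Fin N) :
    PersistenceModule k N where
  V i := Fin (intervalDim b d i) → k
  map i j hij :=
    if h : b ≤ i ∧ j ≤ d then
      LinearMap.funLeft k k
        (Fin.cast (by
          simp [intervalDim, h.1, h.2, h.1.trans hij, hij.trans h.2]))
    else 0
  map_id i := by
    try dsimp only
    by_cases h : b ≤ i ∧ i ≤ d
    · rw [dif_pos h]
      refine LinearMap.ext fun x => funext fun t => ?_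
      simp [LinearMap.funLeft_apply]
    · rw [dif_neg h]
      refine LinearMap.ext fun x => funext fun t => ?_
      have h0 : intervalDim b d i = 0 := by simp [intervalDim, h]
      exact absurd t.isLt (by omega)
  map_comp i j l hij hjl := by
    try dsimp only
    by_cases h3 : b ≤ i ∧ l ≤ d
    · have h1 : b ≤ i ∧ j ≤ d := ⟨h3.1, hjl.trans h3.2⟩
      have h2 : b ≤ j ∧ l ≤ d := ⟨h3.1.trans hij, h3.2⟩
      rw [dif_pos h1, dif_pos h2, dif_pos h3]
      refine LinearMap.ext fun x => funext fun t => ?_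
      simp [LinearMap.funLeft_apply]
    · rw [dif_neg h3]
      by_cases h1 : b ≤ i ∧ j ≤ d
      · have h2 : ¬(b ≤ j ∧ l ≤ d) := fun h2 => h3 ⟨h1.1, h2.2⟩
        rw [dif_neg h2, LinearMap.zero_comp]
      · rw [dif_neg h1, LinearMap.comp_zero]

/-- The (pointwise) direct sum of a finite family of persistence modules. -/
noncomputable def persDirectSum {k : Type} [Field k] {N : ℕ} (m : ℕ)
    (Ms : Fin m → PersistenceModule k N) : PersistenceModule k N where
  V i := ∀ l : Fin m, (Ms l).V i
  map i j hij := LinearMap.pi fun l => ((Ms l).map i j hij) ∘ₗ LinearMap.proj l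
  map_id i := by
    refine LinearMap.ext fun x => funext fun t => ?_
    simp [PersistenceModule.map_id]
  map_comp i j l hij hjl := by
    refine LinearMap.ext fun x => funext fun t => ?_
    simp only [LinearMap.comp_apply, LinearMap.pi_apply, LinearMap.proj_apply]
    rw [← LinearMap.comp_apply, (Ms t).map_comp]

/-- An isomorphism of persistence modules: a family of linear equivalences commuting
with the structure maps. -/
structure PersistenceModule.Iso {k : Type} [Field k] {N : ℕ}
    (M₁ M₂ : PersistenceModule k N) where
  equiv : ∀ i : Fin N, M₁.V i ≃ₗ[k] M₂.V i
  comm : ∀ (i j : Fin N) (hij : i ≤ j) (x : M₁.V i),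
    equiv j (M₁.map i j hij x) = M₂.map i j hij (equiv i x)

section Infra

variable {k : Type} [Field k] {N : ℕ}

/-- Composition of persistence module isomorphisms. -/
def PersistenceModule.Iso.trans {M₁ M₂ M₃ : PersistenceModule k N}
    (e : M₁.Iso M₂) (f : M₂.Iso M₃) : M₁.Iso M₃ where
  equiv i := (e.equiv i).trans (f.equiv i)
  comm i j hij x := by
    simp only [LinearEquiv.trans_apply]
    rw [e.comm i j hij x, f.comm i j hij]

/-- Binary (pointwise) product of persistence modules. -/
noncomputable def persProd (M₁ M₂ : PersistenceModule k N) : PersistenceModule k N where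
  V i := M₁.V i × M₂.V i
  map i j hij := (M₁.map i j hij).prodMap (M₂.map i j hij)
  map_id i := by
    refine LinearMap.ext fun x => ?_
    simp [M₁.map_id, M₂.map_id]
  map_comp i j l hij hjl := by
    refine LinearMap.ext fun x => ?_
    simp only [LinearMap.comp_apply, LinearMap.prodMap_apply]
    rw [← LinearMap.comp_apply (M₁.map j l hjl), ← LinearMap.comp_apply (M₂.map j l hjl),
      M₁.map_comp, M₂.map_comp]

/-- Congruence of products on the right factor. -/
noncomputable def persProdCongrRight {M₁ M₂ M₂' : PersistenceModule k N}
    (e : M₂.Iso M₂') : (persProd M₁ M₂).Iso (persProd M₁ M₂') where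
  equiv i := LinearEquiv.prodCongr (LinearEquiv.refl k (M₁.V i)) (e.equiv i)
  comm i j hij x := by
    have h2 := e.comm i j hij x.2
    show ((M₁.map i j hij) x.1, (e.equiv j) ((M₂.map i j hij) x.2))
        = ((M₁.map i j hij) x.1, (M₂'.map i j hij) ((e.equiv i) x.2))
    rw [h2]

/-- Splitting off the head of a direct sum over `Fin (m+1)`. -/
noncomputable def persConsIso (m : ℕ) (M₀ : PersistenceModule k N)
    (Ms : Fin m → PersistenceModule k N) :
    (persProd M₀ (persDirectSum m Ms)).Iso (persDirectSum (m+1) (Fin.cons M₀ Ms)) where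
  equiv i :=
    { toFun := fun p => Fin.cons p.1 p.2
      invFun := fun f => (f 0, fun l => f l.succ)
      map_add' := fun p q => by
        funext l
        refine Fin.cases ?_ (fun l => ?_) l <;> rfl
      map_smul' := fun c p => by
        funext l
        refine Fin.cases ?_ (fun l => ?_) l <;> rfl
      left_inv := fun p => rfl
      right_inv := fun f => by
        funext l
        refine Fin.cases ?_ (fun l => ?_) l <;> rfl }
  comm i j hij x := by
    funext l
    refine Fin.cases ?_ (fun l => ?_) l <;> rfl

/-- Restriction of a persistence module to an invariant family of submodules. -/
noncomputable def persRestrict (M : PersistenceModule k N)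
    (U : ∀ i, Submodule k (M.V i))
    (hU : ∀ (i j : Fin N) (hij : i ≤ j), ∀ x ∈ U i, M.map i j hij x ∈ U j) :
    PersistenceModule k N where
  V i := U i
  map i j hij := (M.map i j hij).restrict (hU i j hij)
  map_id i := by
    refine LinearMap.ext fun x => Subtype.ext ?_
    simp [LinearMap.restrict_apply, M.map_id]
  map_comp i j l hij hjl := by
    refine LinearMap.ext fun x => Subtype.ext ?_
    simp only [LinearMap.comp_apply, LinearMap.restrict_apply]
    exact LinearMap.congr_fun (M.map_comp i j l hij hjl) x.val

/-- A linear equivalence between any two subsingleton modules. -/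
noncomputable def subsingletonLEquiv (V W : Type) [AddCommGroup V] [Module k V]
    [AddCommGroup W] [Module k W] [Subsingleton V] [Subsingleton W] : V ≃ₗ[k] W :=
  LinearEquiv.ofSubsingleton V W

instance subsingletonFinIntervalDim (b d i : Fin N) :
    Subsingleton (Fin (intervalDim b d i)) := by
  unfold intervalDim
  split <;> infer_instance

end Infra

section Main

variable {k : Type} [Field k] {N : ℕ}

lemma intervalModule_map_pos (b d i j : Fin N) (hij : i ≤ j) (h : b ≤ i ∧ j ≤ d) :
    (intervalModule k N b d).map i j hij = LinearMap.funLeft k k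
      (Fin.cast (by simp [intervalDim, h.1, h.2, h.1.trans hij, hij.trans h.2])) := by
  show dite _ _ _ = _
  exact dif_pos h

lemma intervalModule_map_neg (b d i j : Fin N) (hij : i ≤ j) (h : ¬(b ≤ i ∧ j ≤ d)) :
    (intervalModule k N b d).map i j hij = 0 := by
  show dite _ _ _ = _
  exact dif_neg h

set_option maxHeartbeats 2000000 in
lemma exists_split (M : PersistenceModule k N)
    (hfd : ∀ i, FiniteDimensional k (M.V i))
    (i₀ : Fin N) (v₀ : M.V i₀) (hv₀ : v₀ ≠ 0) :
    ∃ (b d : Fin N) (_ : b ≤ d) (M' : PersistenceModule k N),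
      (∀ i, FiniteDimensional k (M'.V i)) ∧
      (∀ i, Module.finrank k (M'.V i) ≤ Module.finrank k (M.V i)) ∧
      Module.finrank k (M'.V b) < Module.finrank k (M.V b) ∧
      Nonempty (M.Iso (persProd (intervalModule k N b d) M')) := by
  classical
  -- the death index d : maximal index carrying a nonzero vector
  set T : Finset (Fin N) := Finset.univ.filter (fun i => ∃ v : M.V i, v ≠ 0) with hT
  have hi₀T : i₀ ∈ T := by
    simp only [hT, Finset.mem_filter, Finset.mem_univ, true_and]
    exact ⟨v₀, hv₀⟩
  have hTne : T.Nonempty := ⟨i₀, hi₀T⟩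
  set d : Fin N := T.max' hTne with hd
  have hdT : d ∈ T := T.max'_mem hTne
  obtain ⟨vd, hvd⟩ : ∃ v : M.V d, v ≠ 0 := by
    simpa only [hT, Finset.mem_filter, Finset.mem_univ, true_and] using hdT
  have hsub : ∀ j : Fin N, d < j → Subsingleton (M.V j) := by
    intro j hj
    by_contra hns
    obtain ⟨a, b2, hab⟩ := (not_subsingleton_iff_nontrivial.mp hns).exists_pair_ne
    have hjT : j ∈ T := by
      simp only [hT, Finset.mem_filter, Finset.mem_univ, true_and]
      exact ⟨a - b2, sub_ne_zero.mpr hab⟩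
    exact absurd (T.le_max' j hjT) (not_le.mpr hj)
  -- the birth index b : minimal index mapping nontrivially into d
  set B : Finset (Fin N) := Finset.univ.filter (fun i => ∃ h : i ≤ d, M.map i d h ≠ 0) with hB
  have hdB : d ∈ B := by
    simp only [hB, Finset.mem_filter, Finset.mem_univ, true_and]
    refine ⟨le_rfl, fun h0 => hvd ?_⟩
    calc vd = M.map d d le_rfl vd := by rw [M.map_id]; rfl
    _ = 0 := by rw [h0]; rfl
  set b : Fin N := B.min' ⟨d, hdB⟩ with hb
  have hbB : b ∈ B := B.min'_mem _
  obtain ⟨hbd, hmapbd⟩ : ∃ h : b ≤ d, M.map b d h ≠ 0 := by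
    simpa only [hB, Finset.mem_filter, Finset.mem_univ, true_and] using hbB
  have hminb : ∀ i : Fin N, i < b → ∀ h : i ≤ d, M.map i d h = 0 := by
    intro i hib h
    by_contra hne
    have hiB : i ∈ B := by
      simp only [hB, Finset.mem_filter, Finset.mem_univ, true_and]
      exact ⟨h, hne⟩
    exact absurd (B.min'_le i hiB) (not_le.mpr hib)
  obtain ⟨x, hx⟩ : ∃ x : M.V b, M.map b d hbd x ≠ 0 := by
    by_contra hc
    push_neg at hc
    exact hmapbd (LinearMap.ext fun y => by simpa using hc y)
  set xd : M.V d := M.map b d hbd x with hxd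
  obtain ⟨Ud, hcompl⟩ := Submodule.exists_isCompl (Submodule.span k {xd})
  have hxdUd : xd ∉ Ud := by
    intro hmem
    have hmem2 : xd ∈ Submodule.span k {xd} ⊓ Ud :=
      ⟨Submodule.mem_span_singleton_self xd, hmem⟩
    rw [hcompl.inf_eq_bot] at hmem2
    exact hx (by simpa using hmem2)
  -- invariant complement family
  set U : ∀ i, Submodule k (M.V i) :=
    fun i => if h : i ≤ d then Submodule.comap (M.map i d h) Ud else ⊤ with hU
  have hUinv : ∀ (i j : Fin N) (hij : i ≤ j), ∀ y ∈ U i, M.map i j hij y ∈ U j := by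
    intro i j hij y hy
    by_cases hjd : j ≤ d
    · have hid : i ≤ d := hij.trans hjd
      simp only [hU, dif_pos hjd, Submodule.mem_comap]
      simp only [hU, dif_pos hid, Submodule.mem_comap] at hy
      rw [← LinearMap.comp_apply, M.map_comp]
      exact hy
    · simp [hU, dif_neg hjd]
  -- the generator family
  set xi : ∀ i, M.V i := fun i => if h : b ≤ i then M.map b i h x else 0 with hxi
  have hxi_mapd : ∀ (i : Fin N) (h1 : b ≤ i) (h2 : i ≤ d), M.map i d h2 (xi i) = xd := by
    intro i h1 h2
    simp only [hxi, dif_pos h1]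
    rw [← LinearMap.comp_apply, M.map_comp]
  have hxi_map : ∀ (i j : Fin N) (hij : i ≤ j), b ≤ i → M.map i j hij (xi i) = xi j := by
    intro i j hij h1
    simp only [hxi, dif_pos h1, dif_pos (h1.trans hij)]
    rw [← LinearMap.comp_apply, M.map_comp]
  have hxi_ne : ∀ (i : Fin N), b ≤ i → i ≤ d → xi i ≠ 0 := by
    intro i h1 h2 h0
    exact hx (by rw [← hxi_mapd i h1 h2, h0, map_zero])
  have hxi_notU : ∀ (i : Fin N), b ≤ i → i ≤ d → xi i ∉ U i := by
    intro i h1 h2 hmem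
    simp only [hU, dif_pos h2, Submodule.mem_comap] at hmem
    rw [hxi_mapd i h1 h2] at hmem
    exact hxdUd hmem
  have hUtop : ∀ i : Fin N, ¬(b ≤ i ∧ i ≤ d) → U i = ⊤ := by
    intro i hi
    by_cases h2 : i ≤ d
    · have h1 : i < b := by
        rcases not_and_or.mp hi with h | h
        · exact lt_of_not_ge h
        · exact absurd h2 h
      simp only [hU, dif_pos h2]
      refine Submodule.eq_top_iff'.mpr fun y => ?_
      simp only [Submodule.mem_comap, hminb i h1 h2, LinearMap.zero_apply]
      exact Ud.zero_mem
    · simp [hU, dif_neg h2]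
  have hcompl_i : ∀ (i : Fin N), b ≤ i → i ≤ d →
      IsCompl (Submodule.span k {xi i}) (U i) := by
    intro i h1 h2
    constructor
    · rw [disjoint_iff]
      refine (Submodule.eq_bot_iff _).mpr fun y hy => ?_
      obtain ⟨hy1, hy2⟩ := Submodule.mem_inf.mp hy
      obtain ⟨c, rfl⟩ := Submodule.mem_span_singleton.mp hy1
      by_cases hc : c = 0
      · simp [hc]
      · exfalso
        simp only [hU, dif_pos h2, Submodule.mem_comap, map_smul] at hy2
        rw [hxi_mapd i h1 h2] at hy2
        have : xd ∈ Ud := by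
          have := Ud.smul_mem c⁻¹ hy2
          rwa [smul_smul, inv_mul_cancel₀ hc, one_smul] at this
        exact hxdUd this
    · rw [codisjoint_iff]
      refine Submodule.eq_top_iff'.mpr fun y => ?_
      have hyd : M.map i d h2 y ∈ Submodule.span k {xd} ⊔ Ud := by
        rw [hcompl.sup_eq_top]
        trivial
      obtain ⟨s, hs, u, hu, hsu⟩ := Submodule.mem_sup.mp hyd
      obtain ⟨c, rfl⟩ := Submodule.mem_span_singleton.mp hs
      refine Submodule.mem_sup.mpr ⟨c • xi i,
        Submodule.smul_mem _ c (Submodule.mem_span_singleton_self _),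
        y - c • xi i, ?_, by abel⟩
      simp only [hU, dif_pos h2, Submodule.mem_comap, map_sub, map_smul]
      rw [hxi_mapd i h1 h2, ← hsu]
      have harr : c • xd + u - c • xd = u := by abel
      rw [harr]
      exact hu
  -- the complementary persistence module
  set M' : PersistenceModule k N := persRestrict M U hUinv with hM'
  have hfd' : ∀ i, FiniteDimensional k (M'.V i) := fun i => by
    haveI := hfd i
    exact inferInstanceAs (FiniteDimensional k (U i))
  have hle : ∀ i, Module.finrank k (M'.V i) ≤ Module.finrank k (M.V i) := fun i => by
    haveI := hfd i
    exact Submodule.finrank_le (U i)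
  have hlt : Module.finrank k (M'.V b) < Module.finrank k (M.V b) := by
    haveI := hfd b
    show Module.finrank k (U b) < Module.finrank k (M.V b)
    refine Submodule.finrank_lt (fun htop => ?_)
    exact hxi_notU b le_rfl hbd (htop ▸ Submodule.mem_top)
  -- the comparison maps
  set It : PersistenceModule k N := intervalModule k N b d with hIt
  set E : ∀ i, (((Fin (intervalDim b d i) → k) × (U i)) →ₗ[k] M.V i) := fun i =>
    { toFun := fun p => (∑ t, p.1 t) • xi i + (p.2 : M.V i)
      map_add' := fun p q => by
        show (∑ t, (p.1 t + q.1 t)) • xi i + ((p.2 : M.V i) + (q.2 : M.V i))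
            = ((∑ t, p.1 t) • xi i + (p.2 : M.V i)) + ((∑ t, q.1 t) • xi i + (q.2 : M.V i))
        rw [Finset.sum_add_distrib, add_smul]
        abel
      map_smul' := fun c p => by
        show (∑ t, c * p.1 t) • xi i + c • (p.2 : M.V i)
            = c • ((∑ t, p.1 t) • xi i + (p.2 : M.V i))
        rw [← Finset.mul_sum, smul_add, smul_smul] } with hE
  have hE_apply : ∀ (i : Fin N) (p : (Fin (intervalDim b d i) → k) × (U i)),
      E i p = (∑ t, p.1 t) • xi i + (p.2 : M.V i) := fun i p => rfl
  have hbij : ∀ i, Function.Bijective (E i) := by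
    intro i
    by_cases h : b ≤ i ∧ i ≤ d
    · have h1 : intervalDim b d i = 1 := if_pos h
      haveI : Unique (Fin (intervalDim b d i)) := by rw [h1]; infer_instance
      have hker : ∀ p, E i p = 0 → p = 0 := by
        intro p hp
        rw [hE_apply] at hp
        have hmem : (∑ t, p.1 t) • xi i = -(p.2 : M.V i) := by
          rw [eq_neg_iff_add_eq_zero]; exact hp
        have hz : (∑ t, p.1 t) • xi i = 0 := by
          refine Submodule.disjoint_def.mp (hcompl_i i h.1 h.2).disjoint _
            (Submodule.smul_mem _ _ (Submodule.mem_span_singleton_self _)) ?_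
          rw [hmem]
          exact (U i).neg_mem p.2.2
        have hc0 : (∑ t, p.1 t) = 0 := by
          rcases smul_eq_zero.mp hz with h' | h'
          · exact h'
          · exact absurd h' (hxi_ne i h.1 h.2)
        have hp2 : (p.2 : M.V i) = 0 := by
          rwa [hc0, zero_smul, zero_add] at hp
        refine Prod.ext (funext fun t => ?_) (Subtype.ext hp2)
        have := hc0
        rwa [Fintype.sum_unique, Subsingleton.elim default t] at this
      constructor
      · intro p q hpq
        have := hker (p - q) (by rw [map_sub, hpq, sub_self])
        exact sub_eq_zero.mp this
      · intro y
        have hy : y ∈ Submodule.span k {xi i} ⊔ U i := by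
          rw [(hcompl_i i h.1 h.2).sup_eq_top]
          trivial
        obtain ⟨s, hs, u, hu, hsu⟩ := Submodule.mem_sup.mp hy
        obtain ⟨c, rfl⟩ := Submodule.mem_span_singleton.mp hs
        refine ⟨(fun _ => c, ⟨u, hu⟩), ?_⟩
        rw [hE_apply]
        simp only [Fintype.sum_unique]
        exact hsu
    · have h0 : intervalDim b d i = 0 := if_neg h
      haveI : IsEmpty (Fin (intervalDim b d i)) := by rw [h0]; infer_instance
      have hsum0 : ∀ c : Fin (intervalDim b d i) → k, (∑ t, c t) = 0 := fun c => by
        rw [Finset.univ_eq_empty, Finset.sum_empty]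
      constructor
      · intro p q hpq
        rw [hE_apply, hE_apply, hsum0, hsum0, zero_smul, zero_add, zero_add] at hpq
        exact Prod.ext (funext fun t => isEmptyElim t) (Subtype.ext hpq)
      · intro y
        refine ⟨(fun t => 0, ⟨y, by rw [hUtop i h]; trivial⟩), ?_⟩
        rw [hE_apply, hsum0, zero_smul, zero_add]
  have hcomm : ∀ (i j : Fin N) (hij : i ≤ j) (p : (Fin (intervalDim b d i) → k) × (U i)),
      M.map i j hij (E i p) = E j ((persProd It M').map i j hij p) := by
    intro i j hij p
    have hmap_pair : (persProd It M').map i j hij p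
        = (It.map i j hij p.1, (M.map i j hij).restrict (hUinv i j hij) p.2) := rfl
    have hres : (((M.map i j hij).restrict (hUinv i j hij) p.2 : U j) : M.V j)
        = M.map i j hij (p.2 : M.V i) := rfl
    have key : (∑ t, (It.map i j hij p.1) t) • xi j
        = (∑ t, p.1 t) • M.map i j hij (xi i) := by
      by_cases hb2 : b ≤ i ∧ j ≤ d
      · have h1i : intervalDim b d i = 1 := if_pos ⟨hb2.1, hij.trans hb2.2⟩
        have h1j : intervalDim b d j = 1 := if_pos ⟨hb2.1.trans hij, hb2.2⟩
        haveI : Unique (Fin (intervalDim b d i)) := by rw [h1i]; infer_instance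
        haveI : Unique (Fin (intervalDim b d j)) := by rw [h1j]; infer_instance
        have happ : (It.map i j hij p.1) default = p.1 default := by
          show ((intervalModule k N b d).map i j hij p.1) default = p.1 default
          rw [intervalModule_map_pos b d i j hij hb2]
          exact congrArg p.1 (Subsingleton.elim _ _)
        erw [hxi_map i j hij hb2.1, Fintype.sum_unique, Fintype.sum_unique, happ]
      · have hz : It.map i j hij p.1 = (0 : Fin (intervalDim b d j) → k) := by
          show (intervalModule k N b d).map i j hij p.1 = _
          rw [intervalModule_map_neg b d i j hij hb2]
          rfl
        rw [hz]
        simp only [Pi.zero_apply, Finset.sum_const_zero, zero_smul]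
        by_cases hbi : b ≤ i
        · have hjd : ¬ j ≤ d := fun hjd' => hb2 ⟨hbi, hjd'⟩
          haveI := hsub j (lt_of_not_ge hjd)
          exact Subsingleton.elim _ _
        · have hxi0 : xi i = 0 := by simp only [hxi, dif_neg hbi]
          rw [hxi0, map_zero, smul_zero]
    erw [hmap_pair, hE_apply i p, hE_apply j (It.map i j hij p.1,
      (M.map i j hij).restrict (hUinv i j hij) p.2)]
    dsimp only
    rw [map_add, map_smul, hres, key]
  refine ⟨b, d, hbd, M', hfd', hle, hlt, ⟨?_⟩⟩
  let Eq : ∀ i, (persProd It M').V i ≃ₗ[k] M.V i :=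
    fun i => LinearEquiv.ofBijective (E i) (hbij i)
  exact
    { equiv := fun i => (Eq i).symm
      comm := by
        intro i j hij y
        have hy : E i ((Eq i).symm y) = y := (Eq i).apply_symm_apply y
        conv_lhs => rw [← hy]
        erw [hcomm i j hij]
        exact (Eq j).symm_apply_apply _ }

lemma trivialCase (M : PersistenceModule k N) (hss : ∀ i, Subsingleton (M.V i)) :
    ∃ (m : ℕ) (b d : Fin m → Fin N), (∀ l : Fin m, b l ≤ d l) ∧
      Nonempty (M.Iso (persDirectSum m fun l => intervalModule k N (b l) (d l))) := by
  refine ⟨0, Fin.elim0, Fin.elim0, fun l => l.elim0, ⟨?_⟩⟩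
  haveI hss2 : ∀ i : Fin N, Subsingleton
      ((persDirectSum 0 (fun l : Fin 0 => intervalModule k N (Fin.elim0 l) (Fin.elim0 l))).V i) :=
    fun i => ⟨fun f g => funext fun l => l.elim0⟩
  refine { equiv := fun i => ?_, comm := fun i j hij x => Subsingleton.elim _ _ }
  haveI := hss i
  haveI := hss2 i
  exact LinearEquiv.ofSubsingleton _ _

lemma decompAux (n : ℕ) :
    ∀ (M : PersistenceModule k N) (_ : ∀ i, FiniteDimensional k (M.V i)),
      (∑ i, Module.finrank k (M.V i)) ≤ n →
      ∃ (m : ℕ) (b d : Fin m → Fin N),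
        (∀ l : Fin m, b l ≤ d l) ∧
        Nonempty (M.Iso (persDirectSum m fun l => intervalModule k N (b l) (d l))) := by
  induction n with
  | zero =>
    intro M hfd hsum
    have hss : ∀ i, Subsingleton (M.V i) := by
      intro i
      haveI := hfd i
      have h0 : Module.finrank k (M.V i) = 0 := by
        have := Finset.sum_eq_zero_iff.mp (Nat.le_zero.mp hsum) i (Finset.mem_univ i)
        exact this
      exact Module.finrank_zero_iff.mp h0
    exact trivialCase M hss
  | succ n ih =>
    intro M hfd hsum
    by_cases hss : ∀ i, Subsingleton (M.V i)
    · exact trivialCase M hss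
    · push_neg at hss
      obtain ⟨i₀, hi₀⟩ := hss
      obtain ⟨a, b2, hab⟩ := hi₀.exists_pair_ne
      obtain ⟨b, d, hbd, M', hfd', hle, hlt, ⟨iso1⟩⟩ :=
        exists_split M hfd i₀ (a - b2) (sub_ne_zero.mpr hab)
      have hsum' : (∑ i, Module.finrank k (M'.V i)) ≤ n := by
        have h1 : (∑ i, Module.finrank k (M'.V i)) < ∑ i, Module.finrank k (M.V i) :=
          Finset.sum_lt_sum (fun i _ => hle i) ⟨b, Finset.mem_univ b, hlt⟩
        omega
      obtain ⟨m, b', d', hbd', ⟨iso2⟩⟩ := ih M' hfd' hsum'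
      refine ⟨m + 1, Fin.cons b b', Fin.cons d d', ?_, ?_⟩
      · intro l
        refine Fin.cases ?_ (fun l => ?_) l
        · exact hbd
        · exact hbd' l
      · have hfun : (fun l : Fin (m+1) =>
            intervalModule k N ((Fin.cons b b' : Fin (m+1) → Fin N) l)
              ((Fin.cons d d' : Fin (m+1) → Fin N) l))
            = Fin.cons (intervalModule k N b d)
                (fun l => intervalModule k N (b' l) (d' l)) := by
          funext l
          refine Fin.cases ?_ (fun l => ?_) l <;> rfl
        rw [hfun]
        exact ⟨(iso1.trans (persProdCongrRight iso2)).trans (persConsIso m _ _)⟩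

end Main

/-- **Interval decomposition.** Every pointwise finite-dimensional persistence module of
length `N` over a field `k` is isomorphic to a finite direct sum of interval modules
`I[b_l, d_l]`. -/
theorem persistenceModule_interval_decomposition
    (k : Type) [Field k] (N : ℕ) (hN : 1 ≤ N)
    (M : PersistenceModule k N)
    (hfd : ∀ i : Fin N, FiniteDimensional k (M.V i)) :
    ∃ (m : ℕ) (b d : Fin m → Fin N),
      (∀ l : Fin m, b l ≤ d l) ∧
      Nonempty (M.Iso (persDirectSum m fun l => intervalModule k N (b l) (d l))) := by
  obtain ⟨m, b, d, h1, h2⟩ :=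
    decompAux (∑ i, Module.finrank k (M.V i)) M hfd le_rfl
  exact ⟨m, b, d, h1, h2⟩
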